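/- Let u be a nonnegative solution of ∂ₜ u = J*u - u on (ℝ\H)×(0,∞), u = 0 on H, where J is even with c = ∫ J(z) z² dz < ∞. Then the second momentum M₂(t) = ∫_ℝ u(x,t) x² dx satisfies d/dt M₂(t) ≤ c M(t), where M(t) = ∫_ℝ u(x,t) dx. -/

import Mathlib

open Real MeasureTheory Set

/-- J is integrable (else the integral would be junk 0 ≠ 1). -/
lemma aux_J_integrable (J : ℝ → ℝ) (hJint : ∫ x, J x = 1) : Integrable J := by
  by_contra h
  rw [integral_undef h] at hJint
  norm_num at hJint

/-- `J z * z^n` is integrable. -/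
lemma aux_Jpow_integrable (J : ℝ → ℝ) (d : ℝ) (hd : 0 < d)
    (hJpos : ∀ x, 0 ≤ J x) (hJsupp : ∀ x, d ≤ |x| → J x = 0)
    (hJmeas : Integrable J) (n : ℕ) :
    Integrable (fun z => J z * z ^ n) := by
  refine (hJmeas.const_mul (d ^ n)).mono'
    (hJmeas.aestronglyMeasurable.mul (measurable_id.pow_const n).aestronglyMeasurable)
    (Filter.Eventually.of_forall fun z => ?_)
  by_cases hz : d ≤ |z|
  · rw [hJsupp z hz]
    simp
  · push_neg at hz
    have h1 : |z| ^ n ≤ d ^ n := pow_le_pow_left₀ (abs_nonneg z) hz.le n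
    have h2 : ‖J z * z ^ n‖ = J z * |z| ^ n := by
      rw [norm_mul, Real.norm_of_nonneg (hJpos z), norm_pow, Real.norm_eq_abs]
    rw [h2]
    calc J z * |z| ^ n ≤ J z * d ^ n :=
          mul_le_mul_of_nonneg_left h1 (hJpos z)
      _ = d ^ n * J z := by ring

lemma aux_odd_zero (J : ℝ → ℝ) (hJeven : ∀ x, J (-x) = J x) :
    (∫ z, J z * z) = 0 := by
  have h := integral_neg_eq_self (fun z => J z * z) volume
  simp only [hJeven, mul_neg] at h
  rw [integral_neg] at h
  linarith

/-- The key identity `∫ J(x - y) x² dx = y² + c`. -/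
lemma aux_core (J : ℝ → ℝ) (d c : ℝ) (hd : 0 < d)
    (hJpos : ∀ x, 0 ≤ J x) (hJeven : ∀ x, J (-x) = J x)
    (hJsupp : ∀ x, d ≤ |x| → J x = 0) (hJint : ∫ x, J x = 1)
    (hc : ∫ z, J z * z ^ 2 = c) (y : ℝ) :
    (∫ x, J (x - y) * x ^ 2) = y ^ 2 + c := by
  have hJmeas : Integrable J := aux_J_integrable J hJint
  have hJ1 : Integrable (fun z => J z * z) := by
    simpa using aux_Jpow_integrable J d hd hJpos hJsupp hJmeas 1
  have hJ2 : Integrable (fun z => J z * z ^ 2) :=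
    aux_Jpow_integrable J d hd hJpos hJsupp hJmeas 2
  have h1 : (fun x => J (x - y) * x ^ 2)
      = fun x => (fun z => J z * (z + y) ^ 2) (x - y) := by
    funext x; simp
  rw [h1, integral_sub_right_eq_self (fun z => J z * (z + y) ^ 2) y]
  have h2 : (fun z => J z * (z + y) ^ 2)
      = fun z => J z * z ^ 2 + ((2 * y) * (J z * z) + y ^ 2 * J z) := by
    funext z; ring
  have hadd1 : Integrable (fun z => (2 * y) * (J z * z) + y ^ 2 * J z) :=
    (hJ1.const_mul (2 * y)).add (hJmeas.const_mul (y ^ 2))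
  rw [h2, integral_add hJ2 hadd1,
    integral_add (hJ1.const_mul (2 * y)) (hJmeas.const_mul (y ^ 2)),
    integral_const_mul, integral_const_mul, hc, aux_odd_zero J hJeven, hJint]
  ring

/-- Product integrability of `(x,y) ↦ J(x-y) v(y) w(x)`. -/
lemma aux_prod_integrable (J : ℝ → ℝ) (d : ℝ) (hd : 0 < d)
    (hJpos : ∀ x, 0 ≤ J x) (hJsupp : ∀ x, d ≤ |x| → J x = 0)
    (hJmeas : Integrable J)
    (v : ℝ → ℝ) (hvpos : ∀ x, 0 ≤ v x) (hvmeas : AEStronglyMeasurable v volume)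
    (w : ℝ → ℝ) (hw : Continuous w) (hwpos : ∀ x, 0 ≤ w x)
    (W : ℝ → ℝ) (hW : ∀ x y, |x - y| < d → w x ≤ W y)
    (m : ℝ → ℝ) (hm : ∀ y, (∫ x, J (x - y) * w x) = m y)
    (hvm : Integrable (fun y => v y * m y)) :
    Integrable (fun p : ℝ × ℝ => J (p.1 - p.2) * v p.2 * w p.1)
      (volume.prod volume) := by
  have h1 : AEStronglyMeasurable (fun p : ℝ × ℝ => J (p.1 - p.2))
      (volume.prod volume) :=
    hJmeas.aestronglyMeasurable.comp_quasiMeasurePreserving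
      (quasiMeasurePreserving_sub volume volume)
  have hmeasP : AEStronglyMeasurable
      (fun p : ℝ × ℝ => J (p.1 - p.2) * v p.2 * w p.1) (volume.prod volume) :=
    (h1.mul hvmeas.comp_snd).mul (hw.comp continuous_fst).aestronglyMeasurable
  rw [integrable_prod_iff' hmeasP]
  constructor
  · refine Filter.Eventually.of_forall fun y => ?_
    have hWy : 0 ≤ W y := le_trans (hwpos y) (hW y y (by simpa using hd))
    refine ((hJmeas.comp_sub_right y).const_mul (v y * W y)).mono'
      (((hJmeas.comp_sub_right y).aestronglyMeasurable.mul_const (v y)).mul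
        hw.aestronglyMeasurable)
      (Filter.Eventually.of_forall fun x => ?_)
    by_cases hxy : |x - y| < d
    · have hnn : 0 ≤ J (x - y) * v y * w x :=
        mul_nonneg (mul_nonneg (hJpos _) (hvpos y)) (hwpos x)
      rw [Real.norm_of_nonneg hnn]
      calc J (x - y) * v y * w x ≤ J (x - y) * v y * W y :=
            mul_le_mul_of_nonneg_left (hW x y hxy)
              (mul_nonneg (hJpos _) (hvpos y))
        _ = v y * W y * J (x - y) := by ring
    · push_neg at hxy
      rw [hJsupp _ hxy]
      simp
  · have heq : (fun y => ∫ x, ‖J (x - y) * v y * w x‖) = fun y => v y * m y := by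
      funext y
      have h3 : (fun x => ‖J (x - y) * v y * w x‖)
          = fun x => v y * (J (x - y) * w x) := by
        funext x
        rw [Real.norm_of_nonneg (mul_nonneg (mul_nonneg (hJpos _) (hvpos y)) (hwpos x))]
        ring
      rw [h3, integral_const_mul, hm y]
    simpa only [heq] using hvm

theorem second_momentum_growth
    (J : ℝ → ℝ) (d c : ℝ) (hd : 0 < d)
    (hJpos : ∀ x, 0 ≤ J x) (hJeven : ∀ x, J (-x) = J x)
    (hJsupp : ∀ x, d ≤ |x| → J x = 0)
    (hJint : ∫ x, J x = 1)
    (hc : ∫ z, J z * z ^ 2 = c)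
    (H : Set ℝ) (hHopen : IsOpen H) (hHbdd : Bornology.IsBounded H)
    (u : ℝ → ℝ → ℝ)
    (hupos : ∀ x t, 0 ≤ u x t)
    (hPDE : ∀ x ∉ H, ∀ t > 0,
      HasDerivAt (fun s => u x s)
        ((∫ y, J (x - y) * u y t) - u x t) t)
    (hDir : ∀ x ∈ H, ∀ t > 0, u x t = 0)
    (hmom : ∀ t ≥ 0, Integrable (fun x => u x t * (1 + x ^ 2))) :
    ∀ t > 0, ∃ D : ℝ,
      HasDerivAt (fun s => ∫ x, u x s * x ^ 2) D t ∧
      D ≤ c * ∫ x, u x t := by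
  intro t ht
  have hJmeas : Integrable J := aux_J_integrable J hJint
  have hcnn : 0 ≤ c := by
    rw [← hc]; exact integral_nonneg fun z => mul_nonneg (hJpos z) (sq_nonneg z)
  set K : ℝ → ℝ → ℝ := fun x s => ∫ y, J (x - y) * u y s with hK
  -- basic integrability/measurability of u at fixed nonnegative time
  have humeas : ∀ s, 0 ≤ s → AEStronglyMeasurable (fun x => u x s) volume := by
    intro s hs
    have h1 := (hmom s hs).aestronglyMeasurable
    have h2 : (fun x => u x s) = fun x => (u x s * (1 + x ^ 2)) * (1 + x ^ 2)⁻¹ := by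
      funext x
      have : (1 : ℝ) + x ^ 2 ≠ 0 := by positivity
      field_simp
    rw [h2]
    have hcont : Continuous fun x : ℝ => (1 + x ^ 2)⁻¹ :=
      (continuous_const.add (continuous_pow 2)).inv₀ fun x => (by positivity : (1 : ℝ) + x ^ 2 ≠ 0)
    exact h1.mul hcont.aestronglyMeasurable
  have hu_int : ∀ s, 0 ≤ s → Integrable (fun x => u x s) := by
    intro s hs
    refine (hmom s hs).mono' (humeas s hs) (Filter.Eventually.of_forall fun x => ?_)
    rw [Real.norm_of_nonneg (hupos x s)]
    nlinarith [hupos x s, sq_nonneg x]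
  have hux2_int : ∀ s, 0 ≤ s → Integrable (fun x => u x s * x ^ 2) := by
    intro s hs
    refine (hmom s hs).mono' ((humeas s hs).mul
      (measurable_id.pow_const 2).aestronglyMeasurable)
      (Filter.Eventually.of_forall fun x => ?_)
    rw [Real.norm_of_nonneg (mul_nonneg (hupos x s) (sq_nonneg x))]
    nlinarith [hupos x s, sq_nonneg x]
  -- product integrability at a fixed nonnegative time, weight 1 and weight x²
  have hprod1 : ∀ s, 0 ≤ s → Integrable
      (fun p : ℝ × ℝ => J (p.1 - p.2) * u p.2 s * (1 : ℝ)) (volume.prod volume) := by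
    intro s hs
    refine aux_prod_integrable J d hd hJpos hJsupp hJmeas _ (fun x => hupos x s)
      (humeas s hs) (fun _ => (1 : ℝ)) continuous_const (fun _ => zero_le_one)
      (fun _ => (1 : ℝ)) (fun _ _ _ => le_refl 1) (fun _ => (1 : ℝ)) (fun y => by
        simp only [mul_one]
        rw [integral_sub_right_eq_self J y]
        exact hJint) ?_
    simpa using hu_int s hs
  have hprod2 : ∀ s, 0 ≤ s → Integrable
      (fun p : ℝ × ℝ => J (p.1 - p.2) * u p.2 s * p.1 ^ 2) (volume.prod volume) := by
    intro s hs
    refine aux_prod_integrable J d hd hJpos hJsupp hJmeas _ (fun x => hupos x s)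
      (humeas s hs) (fun x => x ^ 2) (by continuity) (fun x => sq_nonneg x)
      (fun y => (|y| + d) ^ 2) ?_ (fun y => y ^ 2 + c)
      (aux_core J d c hd hJpos hJeven hJsupp hJint hc) ?_
    · intro x y hxy
      have h1 : |x| ≤ |y| + d := by
        have := abs_sub_abs_le_abs_sub x y
        linarith [hxy.le]
      calc x ^ 2 = |x| ^ 2 := (sq_abs x).symm
        _ ≤ (|y| + d) ^ 2 := pow_le_pow_left₀ (abs_nonneg x) h1 2
    · refine ((hmom s hs).const_mul (1 + c)).mono'
        ((humeas s hs).mul (Continuous.aestronglyMeasurable (by continuity)))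
        (Filter.Eventually.of_forall fun y => ?_)
      have h1 : 0 ≤ u y s * (y ^ 2 + c) :=
        mul_nonneg (hupos y s) (by positivity)
      rw [Real.norm_of_nonneg h1]
      have h0 := hupos y s
      nlinarith [mul_nonneg h0 (mul_nonneg hcnn (sq_nonneg y))]
  -- integrability of K and K * x²
  have hK_int : ∀ s, 0 ≤ s → Integrable (fun x => K x s) := by
    intro s hs
    have h := (hprod1 s hs).integral_prod_left
    simpa [hK] using h
  have hKx2_int : ∀ s, 0 ≤ s → Integrable (fun x => K x s * x ^ 2) := by
    intro s hs
    have h := (hprod2 s hs).integral_prod_left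
    have heq : (fun x => ∫ y, J (x - y) * u y s * x ^ 2) = fun x => K x s * x ^ 2 := by
      funext x
      rw [hK]
      exact integral_mul_const (x ^ 2) (fun y => J (x - y) * u y s)
    rwa [heq] at h
  have hKpos : ∀ x s, 0 ≤ K x s := fun x s =>
    integral_nonneg fun y => mul_nonneg (hJpos _) (hupos y s)
  -- Fubini: ∫ K(x,s) x² dx = ∫ u(y,s) (y² + c) dy
  have hFub : ∀ s, 0 ≤ s → (∫ x, K x s * x ^ 2) = ∫ y, u y s * (y ^ 2 + c) := by
    intro s hs
    have h1 : (fun x => K x s * x ^ 2) = fun x => ∫ y, J (x - y) * u y s * x ^ 2 := by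
      funext x
      rw [hK]
      exact (integral_mul_const (x ^ 2) (fun y => J (x - y) * u y s)).symm
    rw [h1,
      integral_integral_swap (f := fun x y => J (x - y) * u y s * x ^ 2) (hprod2 s hs)]
    congr 1
    funext y
    have h2 : (fun x => J (x - y) * u y s * x ^ 2)
        = fun x => u y s * (J (x - y) * x ^ 2) := by
      funext x; ring
    rw [h2, integral_const_mul, aux_core J d c hd hJpos hJeven hJsupp hJint hc y]
  -- the exponential monotonicity estimate
  set t₁ : ℝ := 2 * t with ht₁
  have ht₁pos : 0 < t₁ := by positivity
  have umono : ∀ y σ, 0 < σ → σ ≤ t₁ → u y σ ≤ Real.exp (t₁ - σ) * u y t₁ := by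
    intro y σ hσ hσt₁
    by_cases hy : y ∈ H
    · rw [hDir y hy σ hσ, hDir y hy t₁ ht₁pos]
      simp
    · have hgd : ∀ τ ∈ Ioi (0 : ℝ),
          HasDerivAt (fun τ => Real.exp τ * u y τ) (Real.exp τ * K y τ) τ := by
        intro τ hτ
        have h1 := (Real.hasDerivAt_exp τ).mul (hPDE y hy τ hτ)
        have h2 : Real.exp τ * u y τ
            + Real.exp τ * ((∫ z, J (y - z) * u z τ) - u y τ) = Real.exp τ * K y τ := by
          rw [hK]; ring
        rw [← h2]
        exact h1
      have hmono : MonotoneOn (fun τ => Real.exp τ * u y τ) (Ioi (0 : ℝ)) := by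
        refine monotoneOn_of_deriv_nonneg (convex_Ioi 0) ?_ ?_ ?_
        · intro τ hτ
          exact ((hgd τ hτ).continuousAt).continuousWithinAt
        · intro τ hτ
          rw [interior_Ioi] at hτ
          exact ((hgd τ hτ).differentiableAt).differentiableWithinAt
        · intro τ hτ
          rw [interior_Ioi] at hτ
          rw [(hgd τ hτ).deriv]
          exact mul_nonneg (Real.exp_pos τ).le (hKpos y τ)
      have h3 : Real.exp σ * u y σ ≤ Real.exp t₁ * u y t₁ :=
        hmono hσ ht₁pos hσt₁
      rw [Real.exp_sub, div_mul_eq_mul_div, le_div_iff₀ (Real.exp_pos σ)]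
      calc u y σ * Real.exp σ = Real.exp σ * u y σ := by ring
        _ ≤ Real.exp t₁ * u y t₁ := h3
  -- set up dominated differentiation
  set F' : ℝ → ℝ → ℝ := fun s x =>
    (Hᶜ.indicator (fun x => K x s - u x s) x) * x ^ 2 with hF'
  have hball : ∀ s ∈ Metric.ball t (t / 2), 0 < s ∧ s ≤ t₁ := by
    intro s hs
    rw [Real.ball_eq_Ioo] at hs
    obtain ⟨h1, h2⟩ := hs
    constructor
    · linarith
    · rw [ht₁]; linarith
  have hFmeas : ∀ᶠ s in nhds t, AEStronglyMeasurable (fun x => u x s * x ^ 2) volume := by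
    filter_upwards [Ioi_mem_nhds ht] with s hs
    exact (humeas s (le_of_lt hs)).mul (measurable_id.pow_const 2).aestronglyMeasurable
  have hF'meas : AEStronglyMeasurable (F' t) volume := by
    rw [hF']
    exact (((hK_int t ht.le).sub (hu_int t ht.le)).aestronglyMeasurable.indicator
      hHopen.measurableSet.compl).mul (measurable_id.pow_const 2).aestronglyMeasurable
  have hbound_int : Integrable
      (fun x => Real.exp t₁ * ((K x t₁ + u x t₁) * x ^ 2)) volume := by
    have h1 : (fun x => Real.exp t₁ * ((K x t₁ + u x t₁) * x ^ 2))
        = fun x => Real.exp t₁ * (K x t₁ * x ^ 2 + u x t₁ * x ^ 2) := by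
      funext x; ring
    rw [h1]
    exact ((hKx2_int t₁ ht₁pos.le).add (hux2_int t₁ ht₁pos.le)).const_mul _
  have hbound : ∀ᵐ x, ∀ s ∈ Metric.ball t (t / 2),
      ‖F' s x‖ ≤ Real.exp t₁ * ((K x t₁ + u x t₁) * x ^ 2) := by
    filter_upwards [(hprod1 t₁ ht₁pos.le).prod_right_ae] with x hx
    have hx' : Integrable (fun y => J (x - y) * u y t₁) := by
      simpa using hx
    intro s hs
    obtain ⟨hs0, hst₁⟩ := hball s hs
    have hbpos : 0 ≤ Real.exp t₁ * ((K x t₁ + u x t₁) * x ^ 2) :=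
      mul_nonneg (Real.exp_pos _).le (mul_nonneg
        (add_nonneg (hKpos x t₁) (hupos x t₁)) (sq_nonneg x))
    by_cases hxH : x ∈ H
    · simp only [hF']
      simp only [indicator_of_notMem (notMem_compl_iff.mpr hxH), zero_mul, norm_zero]
      exact hbpos
    · simp only [hF']
      simp only [indicator_of_mem (mem_compl hxH)]
      have hKb : K x s ≤ Real.exp (t₁ - s) * K x t₁ := by
        rw [hK]
        calc (∫ y, J (x - y) * u y s)
            ≤ ∫ y, Real.exp (t₁ - s) * (J (x - y) * u y t₁) := by
              refine integral_mono_of_nonneg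
                (Filter.Eventually.of_forall fun y =>
                  mul_nonneg (hJpos _) (hupos y s))
                (hx'.const_mul _)
                (Filter.Eventually.of_forall fun y => ?_)
              calc J (x - y) * u y s
                  ≤ J (x - y) * (Real.exp (t₁ - s) * u y t₁) :=
                    mul_le_mul_of_nonneg_left (umono y s hs0 hst₁) (hJpos _)
                _ = Real.exp (t₁ - s) * (J (x - y) * u y t₁) := by ring
          _ = Real.exp (t₁ - s) * K x t₁ := by rw [integral_const_mul]
      have hub : u x s ≤ Real.exp (t₁ - s) * u x t₁ := umono x s hs0 hst₁
      have hexp : Real.exp (t₁ - s) ≤ Real.exp t₁ :=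
        Real.exp_le_exp.mpr (by linarith)
      have habs : |K x s - u x s| ≤ K x s + u x s :=
        abs_le.mpr ⟨by linarith [hKpos x s, hupos x s], by linarith [hKpos x s, hupos x s]⟩
      have hsum : K x s + u x s ≤ Real.exp t₁ * (K x t₁ + u x t₁) := by
        have h1 : K x s + u x s ≤ Real.exp (t₁ - s) * (K x t₁ + u x t₁) := by
          rw [mul_add]; exact add_le_add hKb hub
        have h2 : Real.exp (t₁ - s) * (K x t₁ + u x t₁)
            ≤ Real.exp t₁ * (K x t₁ + u x t₁) :=
          mul_le_mul_of_nonneg_right hexp (add_nonneg (hKpos x t₁) (hupos x t₁))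
        linarith
      rw [norm_mul, Real.norm_eq_abs, Real.norm_of_nonneg (sq_nonneg x)]
      calc |K x s - u x s| * x ^ 2 ≤ (K x s + u x s) * x ^ 2 :=
            mul_le_mul_of_nonneg_right habs (sq_nonneg x)
        _ ≤ (Real.exp t₁ * (K x t₁ + u x t₁)) * x ^ 2 :=
            mul_le_mul_of_nonneg_right hsum (sq_nonneg x)
        _ = Real.exp t₁ * ((K x t₁ + u x t₁) * x ^ 2) := by ring
  have hdiff : ∀ᵐ x, ∀ s ∈ Metric.ball t (t / 2),
      HasDerivAt (fun σ => u x σ * x ^ 2) (F' s x) s := by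
    refine Filter.Eventually.of_forall fun x s hs => ?_
    obtain ⟨hs0, -⟩ := hball s hs
    by_cases hxH : x ∈ H
    · simp only [hF']
      simp only [indicator_of_notMem (notMem_compl_iff.mpr hxH), zero_mul]
      have hev : (fun σ => u x σ * x ^ 2) =ᶠ[nhds s] fun _ => (0 : ℝ) := by
        filter_upwards [Ioi_mem_nhds hs0] with σ hσ
        rw [hDir x hxH σ hσ, zero_mul]
      exact (hasDerivAt_const s (0 : ℝ)).congr_of_eventuallyEq hev
    · simp only [hF']
      simp only [indicator_of_mem (mem_compl hxH)]
      exact (hPDE x hxH s hs0).mul_const (x ^ 2)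
  have key := hasDerivAt_integral_of_dominated_loc_of_deriv_le
    (F := fun s x => u x s * x ^ 2) (F' := F') (μ := volume) (x₀ := t)
    (bound := fun x => Real.exp t₁ * ((K x t₁ + u x t₁) * x ^ 2))
    (Metric.ball_mem_nhds t (half_pos ht)) hFmeas (hux2_int t ht.le) hF'meas hbound hbound_int hdiff
  obtain ⟨-, hderiv⟩ := key
  refine ⟨∫ x, F' t x, hderiv, ?_⟩
  -- now the inequality
  have hsplit : (fun x => F' t x)
      = fun x => Hᶜ.indicator (fun x => K x t * x ^ 2) x - u x t * x ^ 2 := by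
    funext x
    simp only [hF']
    by_cases hx : x ∈ H
    · rw [indicator_of_notMem (notMem_compl_iff.mpr hx),
        indicator_of_notMem (notMem_compl_iff.mpr hx), hDir x hx t ht]
      ring
    · rw [indicator_of_mem (mem_compl hx), indicator_of_mem (mem_compl hx)]
      ring
  have hind_int : Integrable (fun x => Hᶜ.indicator (fun x => K x t * x ^ 2) x) :=
    (hKx2_int t ht.le).indicator hHopen.measurableSet.compl
  rw [hsplit, integral_sub hind_int (hux2_int t ht.le)]
  have hle1 : (∫ x, Hᶜ.indicator (fun x => K x t * x ^ 2) x)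
      ≤ ∫ x, K x t * x ^ 2 := by
    refine integral_mono_of_nonneg
      (Filter.Eventually.of_forall fun x =>
        indicator_nonneg (fun x _ => mul_nonneg (hKpos x t) (sq_nonneg x)) x)
      (hKx2_int t ht.le)
      (Filter.Eventually.of_forall fun x =>
        indicator_le_self' (fun x _ => mul_nonneg (hKpos x t) (sq_nonneg x)) x)
  have hval : (∫ x, K x t * x ^ 2) = (∫ x, u x t * x ^ 2) + c * ∫ x, u x t := by
    rw [hFub t ht.le]
    have h2 : (fun y => u y t * (y ^ 2 + c)) = fun y => u y t * y ^ 2 + c * u y t := by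
      funext y; ring
    rw [h2, integral_add (hux2_int t ht.le) ((hu_int t ht.le).const_mul c),
      integral_const_mul]
  linarith
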